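/- Fix positive naturals d, N, M. Let P be a real polynomial function on (ℝ^d)^N × (ℝ^d)^M that is invariant under permutations of the N training blocks. Then there exist a natural number s, monomial functions m_1, ..., m_s on ℝ^d (each of the form u ↦ Π_{j=1}^d u_j^{α_j} for some multi-index α ∈ ℕ^d), and a real polynomial function Q on ℝ^s × (ℝ^d)^M, such that for all (u_1, ..., u_N, V) ∈ (ℝ^d)^N × (ℝ^d)^M: P(u_1, ..., u_N, V) = Q( Σ_{i=1}^N m_1(u_i), ..., Σ_{i=1}^N m_s(u_i), V ). That is, every block-symmetric polynomial is a polynomial in finitely many monomial power-sum aggregates of the training blocks together with the test variables. -/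

import Mathlib

/-- The action of `π ∈ S_N` on `(ℝ^d)^N × (ℝ^d)^M` permuting the `N` training blocks. -/
def blockPerm (d N M : ℕ) (π : Equiv.Perm (Fin N))
    (x : (Fin N → Fin d → ℝ) × (Fin M → Fin d → ℝ)) :
    (Fin N → Fin d → ℝ) × (Fin M → Fin d → ℝ) :=
  (fun i => x.1 (π⁻¹ i), x.2)

/-- A function on `(ℝ^d)^N × (ℝ^d)^M` is a polynomial function if it is the evaluation
of a multivariate polynomial in the `N·d + M·d` real coordinates. -/
def IsPolyFun (d N M : ℕ)
    (f : (Fin N → Fin d → ℝ) × (Fin M → Fin d → ℝ) → ℝ) : Prop :=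
  ∃ p : MvPolynomial ((Fin N × Fin d) ⊕ (Fin M × Fin d)) ℝ,
    ∀ x, f x = MvPolynomial.eval
      (Sum.elim (fun ij => x.1 ij.1 ij.2) (fun ij => x.2 ij.1 ij.2)) p

/-- A function on `ℝ^s × (ℝ^d)^M` is a polynomial function if it is the evaluation of a
multivariate polynomial in the `s + M·d` real coordinates. -/
def IsPolyFunAgg (d M s : ℕ)
    (f : (Fin s → ℝ) × (Fin M → Fin d → ℝ) → ℝ) : Prop :=
  ∃ p : MvPolynomial (Fin s ⊕ (Fin M × Fin d)) ℝ,
    ∀ x, f x = MvPolynomial.eval (Sum.elim x.1 (fun ij => x.2 ij.1 ij.2)) p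

open MvPolynomial Finset


/-- ambient space -/
abbrev Xsp (d N M : ℕ) := (Fin N → Fin d → ℝ) × (Fin M → Fin d → ℝ)

/-- monomial function -/
def monoF (d : ℕ) (α : Fin d → ℕ) (v : Fin d → ℝ) : ℝ := ∏ j, v j ^ α j

/-- generators: power sums of monomials in the blocks, and V coordinates -/
def gensF (d N M : ℕ) : ((Fin d → ℕ) ⊕ (Fin M × Fin d)) → (Xsp d N M → ℝ) :=
  Sum.elim (fun α x => ∑ i, monoF d α (x.1 i)) (fun ij x => x.2 ij.1 ij.2)

noncomputable def Agen (d N M : ℕ) : Subalgebra ℝ (Xsp d N M → ℝ) :=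
  Algebra.adjoin ℝ (Set.range (gensF d N M))

/-- symmetrized block monomial -/
def SymF (d N M : ℕ) (L : Fin N → Fin d → ℕ) : Xsp d N M → ℝ :=
  fun x => ∑ π : Equiv.Perm (Fin N), ∏ i, monoF d (L i) (x.1 (π i))

lemma monoF_add (d : ℕ) (a b : Fin d → ℕ) (v : Fin d → ℝ) :
    monoF d (a + b) v = monoF d a v * monoF d b v := by
  simp [monoF, pow_add, Finset.prod_mul_distrib]

lemma symF_comp (d N M : ℕ) (L : Fin N → Fin d → ℕ) (σ : Equiv.Perm (Fin N)) :
    SymF d N M (L ∘ σ) = SymF d N M L := by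
  funext x
  refine Fintype.sum_equiv (Equiv.mulRight σ⁻¹) _ _ (fun π => ?_)
  calc ∏ i, monoF d (L (σ i)) (x.1 (π i))
      = ∏ i, (fun i => monoF d (L i) (x.1 (π (σ⁻¹ i)))) (σ i) := by
        refine Finset.prod_congr rfl fun i _ => by simp
    _ = ∏ i, monoF d (L i) (x.1 (π (σ⁻¹ i))) := Equiv.prod_comp σ (fun i => monoF d (L i) (x.1 (π (σ⁻¹ i))))
    _ = ∏ i, monoF d (L i) (x.1 ((Equiv.mulRight σ⁻¹ π) i)) := rfl

lemma symF_step (d N M : ℕ) (L0 : Fin N → Fin d → ℕ) (β : Fin d → ℕ) (x : Xsp d N M) :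
    (∑ i, monoF d β (x.1 i)) * SymF d N M L0 x
      = ∑ t0 : Fin N, SymF d N M (Function.update L0 t0 (L0 t0 + β)) x := by
  unfold SymF
  rw [Finset.mul_sum, Finset.sum_comm]
  refine Finset.sum_congr rfl fun π _ => ?_
  have hc : (∑ i, monoF d β (x.1 i)) = ∑ t0, monoF d β (x.1 (π t0)) :=
    (Equiv.sum_comp π (fun i => monoF d β (x.1 i))).symm
  rw [hc, Finset.sum_mul]
  refine Finset.sum_congr rfl fun t0 _ => ?_
  have hupd : ∀ i, monoF d (Function.update L0 t0 (L0 t0 + β) i) (x.1 (π i))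
      = Function.update (fun i => monoF d (L0 i) (x.1 (π i))) t0
          (monoF d (L0 t0 + β) (x.1 (π t0))) i := by
    intro i
    rcases eq_or_ne i t0 with rfl | h
    · simp
    · simp [Function.update_of_ne h]
  rw [Finset.prod_congr rfl (fun i _ => hupd i),
    Finset.prod_update_of_mem (Finset.mem_univ t0),
    Finset.prod_eq_mul_prod_sdiff_singleton_of_mem (Finset.mem_univ t0)
      (fun i => monoF d (L0 i) (x.1 (π i))),
    monoF_add]
  ring

lemma gensF_mem (d N M : ℕ) (v : (Fin d → ℕ) ⊕ (Fin M × Fin d)) :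
    gensF d N M v ∈ Agen d N M :=
  Algebra.subset_adjoin (Set.mem_range_self v)

lemma symF_mem_aux (d N M : ℕ) :
    ∀ (k : ℕ) (L : Fin N → Fin d → ℕ),
      (Finset.univ.filter (fun i => L i ≠ 0)).card = k → SymF d N M L ∈ Agen d N M := by
  intro k
  induction k using Nat.strong_induction_on with
  | _ k ih =>
    intro L hk
    by_cases h0 : ∀ i, L i = 0
    · have hconst : SymF d N M L = algebraMap ℝ (Xsp d N M → ℝ) ((N.factorial : ℕ) : ℝ) := by
        funext x
        simp [SymF, monoF, h0, Fintype.card_perm]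
      rw [hconst]
      exact Subalgebra.algebraMap_mem _ _
    · push_neg at h0
      obtain ⟨i0, hi0⟩ := h0
      set β := L i0 with hβ
      set L0 := Function.update L i0 0 with hL0
      have hi0mem : i0 ∈ Finset.univ.filter (fun i => L i ≠ 0) := by simp [hi0]; exact hi0
      have hkpos : 0 < k := hk ▸ Finset.card_pos.mpr ⟨i0, hi0mem⟩
      have hL0filter : Finset.univ.filter (fun i => L0 i ≠ 0)
          = (Finset.univ.filter (fun i => L i ≠ 0)).erase i0 := by
        ext i
        rcases eq_or_ne i i0 with rfl | h
        · simp [hL0]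
        · simp [hL0, Function.update_of_ne h, h]
      have hL0card : (Finset.univ.filter (fun i => L0 i ≠ 0)).card = k - 1 := by
        rw [hL0filter, Finset.card_erase_of_mem hi0mem, hk]
      -- the set where L0 vanishes
      set Z : Finset (Fin N) := Finset.univ.filter (fun t0 => L0 t0 = 0) with hZ
      have hi0Z : i0 ∈ Z := by simp [hZ, hL0]
      have hZcard : (0 : ℝ) < (Z.card : ℝ) := by
        exact_mod_cast Finset.card_pos.mpr ⟨i0, hi0Z⟩
      -- function-level step identity
      have hstep : gensF d N M (Sum.inl β) * SymF d N M L0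
          = ∑ t0 : Fin N, SymF d N M (Function.update L0 t0 (L0 t0 + β)) := by
        funext x
        have := symF_step d N M L0 β x
        simpa [gensF, Finset.sum_apply] using this
      -- terms with t0 ∈ Z are all SymF L
      have hZterm : ∀ t0 ∈ Z, SymF d N M (Function.update L0 t0 (L0 t0 + β)) = SymF d N M L := by
        intro t0 ht0
        have ht0' : L0 t0 = 0 := by simpa [hZ] using ht0
        have hfun : Function.update L0 t0 (L0 t0 + β) = L ∘ (Equiv.swap i0 t0) := by
          funext i
          rcases eq_or_ne i t0 with rfl | hit
          · simp [ht0', Function.comp, Equiv.swap_apply_right, hβ]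
          · rcases eq_or_ne i i0 with rfl | hii
            · have hti : t0 ≠ i := fun h => hit h.symm
              have hLt0 : L t0 = 0 := by
                rwa [hL0, Function.update_of_ne hti] at ht0'
              simp [Function.update_of_ne hit, hL0, Function.comp,
                Equiv.swap_apply_left, hLt0]
            · simp [Function.update_of_ne hit, hL0, Function.update_of_ne hii,
                Function.comp, Equiv.swap_apply_of_ne_of_ne hii hit]
        rw [hfun, symF_comp]
      -- split the sum
      have hsplit : ∑ t0 : Fin N, SymF d N M (Function.update L0 t0 (L0 t0 + β))
          = (Z.card : ℝ) • SymF d N M L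
            + ∑ t0 ∈ Finset.univ.filter (fun t0 => ¬ L0 t0 = 0),
                SymF d N M (Function.update L0 t0 (L0 t0 + β)) := by
        rw [← Finset.sum_filter_add_sum_filter_not Finset.univ (fun t0 => L0 t0 = 0)]
        congr 1
        rw [Finset.sum_congr rfl hZterm, Finset.sum_const, Nat.cast_smul_eq_nsmul]
      have hmemsum : ∀ t0 ∈ Finset.univ.filter (fun t0 => ¬ L0 t0 = 0),
          SymF d N M (Function.update L0 t0 (L0 t0 + β)) ∈ Agen d N M := by
        intro t0 ht0
        have ht0' : L0 t0 ≠ 0 := by simpa using ht0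
        refine ih (k - 1) (Nat.sub_lt hkpos one_pos) _ ?_
        have hfilter : Finset.univ.filter
            (fun i => Function.update L0 t0 (L0 t0 + β) i ≠ 0)
            = Finset.univ.filter (fun i => L0 i ≠ 0) := by
          ext i
          rcases eq_or_ne i t0 with rfl | h
          · have hne : L0 i + β ≠ 0 := by
              intro hzero
              apply ht0'
              funext j
              have := congrFun hzero j
              simp only [Pi.add_apply, Pi.zero_apply] at this ⊢
              omega
            simp [hne, ht0']
          · simp [Function.update_of_ne h]
        rw [hfilter, hL0card]
      have hmem : (Z.card : ℝ) • SymF d N M L ∈ Agen d N M := by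
        have heq : (Z.card : ℝ) • SymF d N M L
            = gensF d N M (Sum.inl β) * SymF d N M L0
              - ∑ t0 ∈ Finset.univ.filter (fun t0 => ¬ L0 t0 = 0),
                  SymF d N M (Function.update L0 t0 (L0 t0 + β)) := by
          rw [hstep, hsplit]; ring
        rw [heq]
        exact sub_mem
          (mul_mem (gensF_mem d N M _) (ih (k - 1) (Nat.sub_lt hkpos one_pos) _ hL0card))
          (Subalgebra.sum_mem _ hmemsum)
      have hfin : SymF d N M L = (Z.card : ℝ)⁻¹ • ((Z.card : ℝ) • SymF d N M L) := by
        rw [smul_smul, inv_mul_cancel₀ (ne_of_gt hZcard), one_smul]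
      rw [hfin]
      exact Subalgebra.smul_mem _ hmem _

-- the defs from the problem statement
/-- block exponent profile of a monomial -/
def LofF (d N M : ℕ) (m : ((Fin N × Fin d) ⊕ (Fin M × Fin d)) →₀ ℕ) :
    Fin N → Fin d → ℕ := fun i j => m (Sum.inl (i, j))

/-- V-part of a monomial -/
def VfF (d N M : ℕ) (m : ((Fin N × Fin d) ⊕ (Fin M × Fin d)) →₀ ℕ) :
    Xsp d N M → ℝ := fun x => ∏ ij : Fin M × Fin d, x.2 ij.1 ij.2 ^ m (Sum.inr ij)

lemma VfF_mem (d N M : ℕ) (m : ((Fin N × Fin d) ⊕ (Fin M × Fin d)) →₀ ℕ) :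
    VfF d N M m ∈ Agen d N M := by
  have : VfF d N M m = ∏ ij : Fin M × Fin d, (gensF d N M (Sum.inr ij)) ^ m (Sum.inr ij) := by
    funext x
    simp [VfF, gensF, Finset.prod_apply]
  rw [this]
  exact Subalgebra.prod_mem _ fun ij _ => pow_mem (gensF_mem d N M _) _

lemma P_mem (d N M : ℕ)
    (P : (Fin N → Fin d → ℝ) × (Fin M → Fin d → ℝ) → ℝ)
    (hP : IsPolyFun d N M P)
    (hPinv : ∀ π : Equiv.Perm (Fin N), ∀ x, P (blockPerm d N M π x) = P x) :
    P ∈ Agen d N M := by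
  obtain ⟨p, hp⟩ := hP
  have key : ∀ x : Xsp d N M, ((N.factorial : ℕ) : ℝ) * P x
      = ∑ m ∈ p.support, MvPolynomial.coeff m p
          * (SymF d N M (LofF d N M m) x * VfF d N M m x) := by
    intro x
    have h1 : ∑ π : Equiv.Perm (Fin N), P (blockPerm d N M π x)
        = ((N.factorial : ℕ) : ℝ) * P x := by
      rw [Finset.sum_congr rfl fun π _ => hPinv π x, Finset.sum_const]
      simp [Fintype.card_perm, nsmul_eq_mul]
    rw [← h1]
    have h2 : ∀ π : Equiv.Perm (Fin N), P (blockPerm d N M π x)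
        = ∑ m ∈ p.support, MvPolynomial.coeff m p
            * ((∏ i, monoF d (LofF d N M m i) (x.1 (π⁻¹ i))) * VfF d N M m x) := by
      intro π
      rw [hp, MvPolynomial.eval_eq']
      refine Finset.sum_congr rfl fun m _ => ?_
      rw [Fintype.prod_sum_type]
      have hB : (∏ b : Fin M × Fin d,
          (Sum.elim (fun ij : Fin N × Fin d => (blockPerm d N M π x).1 ij.1 ij.2)
            (fun ij : Fin M × Fin d => (blockPerm d N M π x).2 ij.1 ij.2) (Sum.inr b)) ^ m (Sum.inr b))
          = VfF d N M m x := by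
        simp [VfF, blockPerm]
      have hA : (∏ a : Fin N × Fin d,
          (Sum.elim (fun ij : Fin N × Fin d => (blockPerm d N M π x).1 ij.1 ij.2)
            (fun ij : Fin M × Fin d => (blockPerm d N M π x).2 ij.1 ij.2) (Sum.inl a)) ^ m (Sum.inl a))
          = ∏ i, monoF d (LofF d N M m i) (x.1 (π⁻¹ i)) := by
        rw [Fintype.prod_prod_type]
        refine Finset.prod_congr rfl fun i _ => ?_
        simp [monoF, LofF, blockPerm]
      rw [hA, hB]
    rw [Finset.sum_congr rfl fun π _ => h2 π, Finset.sum_comm]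
    refine Finset.sum_congr rfl fun m _ => ?_
    rw [← Finset.mul_sum, ← Finset.sum_mul]
    congr 2
    refine Fintype.sum_equiv (Equiv.inv (Equiv.Perm (Fin N))) _ _ (fun π => ?_)
    rfl
  have hfac : ((N.factorial : ℕ) : ℝ) ≠ 0 := Nat.cast_ne_zero.2 (Nat.factorial_ne_zero N)
  have hPexpr : P = ((N.factorial : ℕ) : ℝ)⁻¹
      • ∑ m ∈ p.support, MvPolynomial.coeff m p
          • (SymF d N M (LofF d N M m) * VfF d N M m) := by
    funext x
    have hkey := key x
    simp only [Pi.smul_apply, Finset.sum_apply, Pi.mul_apply, smul_eq_mul]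
    rw [← hkey, ← mul_assoc, inv_mul_cancel₀ hfac, one_mul]
  rw [hPexpr]
  refine Subalgebra.smul_mem _ (Subalgebra.sum_mem _ fun m _ => ?_) _
  exact Subalgebra.smul_mem _
    (mul_mem (symF_mem_aux d N M _ _ rfl) (VfF_mem d N M m)) _

lemma aeval_pi_apply {σ Y : Type*} (g : σ → (Y → ℝ)) (q : MvPolynomial σ ℝ) (x : Y) :
    (MvPolynomial.aeval g q) x = MvPolynomial.eval (fun v => g v x) q := by
  induction q using MvPolynomial.induction_on with
  | C a => simp [MvPolynomial.algebraMap_eq]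
  | add p q hp hq => simp [hp, hq]
  | mul_X p n hp => simp [hp]

/-- Every polynomial function on `(ℝ^d)^N × (ℝ^d)^M` that is invariant
under permutations of the `N` training blocks is a polynomial `Q` in finitely many
monomial power-sum aggregates `Σᵢ m_r(uᵢ)` of the training blocks together with the
test variables `V`, where each `m_r(u) = Π_j u_j^{α_r(j)}` is a monomial function. -/

theorem block_symmetric_poly_deepsets_form
    (d N M : ℕ) (hd : 0 < d) (hN : 0 < N) (hM : 0 < M)
    (P : (Fin N → Fin d → ℝ) × (Fin M → Fin d → ℝ) → ℝ)
    (hP : IsPolyFun d N M P)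
    (hPinv : ∀ π : Equiv.Perm (Fin N), ∀ x, P (blockPerm d N M π x) = P x) :
    ∃ (s : ℕ) (m : Fin s → (Fin d → ℝ) → ℝ)
      (Q : (Fin s → ℝ) × (Fin M → Fin d → ℝ) → ℝ),
      (∀ r : Fin s, ∃ α : Fin d → ℕ, ∀ u : Fin d → ℝ, m r u = ∏ j, (u j) ^ (α j)) ∧
      IsPolyFunAgg d M s Q ∧
      (∀ x : (Fin N → Fin d → ℝ) × (Fin M → Fin d → ℝ),
        P x = Q (fun r => ∑ i, m r (x.1 i), x.2)) := by
  have hmem : P ∈ (MvPolynomial.aeval (R := ℝ) (gensF d N M)).range := by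
    rw [← Algebra.adjoin_range_eq_range_aeval]
    exact P_mem d N M P hP hPinv
  obtain ⟨q, hq⟩ := hmem
  obtain ⟨t0, q', rfl⟩ := MvPolynomial.exists_finset_rename q
  simp only [AlgHom.toRingHom_eq_coe, RingHom.coe_coe] at hq
  set s := t0.card with hs
  set e := t0.equivFin with he
  refine ⟨s,
    fun r => Sum.elim (monoF d) (fun _ => monoF d 0) ((e.symm r).val),
    fun y => MvPolynomial.eval (Sum.elim y.1 (fun ij => y.2 ij.1 ij.2))
      (MvPolynomial.rename
        (fun v : {x // x ∈ t0} =>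
          Sum.elim (fun _ : Fin d → ℕ => Sum.inl (e v)) Sum.inr v.val) q'),
    ?_, ?_, ?_⟩
  · intro r
    rcases hval : (e.symm r).val with α | ij
    · exact ⟨α, fun u => by
        show Sum.elim (monoF d) (fun _ => monoF d 0) ((e.symm r).val) u = _
        rw [hval]; simp [monoF]⟩
    · exact ⟨0, fun u => by
        show Sum.elim (monoF d) (fun _ => monoF d 0) ((e.symm r).val) u = _
        rw [hval]; simp [monoF]⟩
  · exact ⟨_, fun y => rfl⟩
  · intro x
    have hPx : P x = MvPolynomial.eval (fun v : {x // x ∈ t0} => gensF d N M v.val x) q' := by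
      rw [← hq, MvPolynomial.aeval_rename, aeval_pi_apply]
      rfl
    rw [hPx]
    simp only [MvPolynomial.eval_rename]
    refine congrArg (fun f => MvPolynomial.eval f q') ?_
    funext v
    rcases v with ⟨val, hv⟩
    rcases val with α | ij
    · simp only [Function.comp, Sum.elim_inl, gensF]
      congr 1
      funext i
      have : (e.symm (e ⟨Sum.inl α, hv⟩)).val = Sum.inl α := by
        rw [Equiv.symm_apply_apply]
      rw [this, Sum.elim_inl]
    · simp [Function.comp, gensF]
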